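/- Let n be a natural number, let k, l, γ, δ ∈ Fin n with k ≠ l and γ ≠ δ, and let a₁, a₂ be nonzero complex numbers. Define the n×n complex matrices T₁ = E_{kl} + a₁·E_{lk} and T₂ = E_{γδ} + a₂·E_{δγ}. Then T₁ and T₂ commute (T₁T₂ = T₂T₁) if and only if one of the following holds: (i) k = γ, l = δ and a₁ = a₂ (so T₁ = T₂); (ii) k = δ, l = γ and a₁·a₂ = 1 (so T₁ is proportional to T₂); or (iii) k, l, γ, δ are pairwise distinct. -/

import Mathlib

open Matrix

private lemma mulE {n : ℕ} (i j p q : Fin n) (c d : ℂ) :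
    single i j c * single p q d =
      if j = p then single i q (c * d) else 0 := by
  split_ifs with h
  · subst h; simp
  · exact Matrix.single_mul_single_of_ne (c := c) i j p h d

private lemma Eapply {n : ℕ} (i j x y : Fin n) (c : ℂ) :
    single i j c x y = if i = x ∧ j = y then c else 0 := rfl

/-- Equivalent-support case of the Singleton Matrix Excitation Commutation theorem:
`T₁ = E_{kl} + a₁ E_{lk}` and `T₂ = E_{γδ} + a₂ E_{δγ}` commute iff `T₁ = T₂`,
`T₁ ∝ T₂`, or the four indices are pairwise distinct. -/
theorem stmt1 (n : ℕ) (k l γ δ : Fin n) (hkl : k ≠ l) (hγδ : γ ≠ δ)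
    (a₁ a₂ : ℂ) (ha₁ : a₁ ≠ 0) (ha₂ : a₂ ≠ 0) :
    (single k l (1 : ℂ) + a₁ • single l k (1 : ℂ)) *
        (single γ δ (1 : ℂ) + a₂ • single δ γ (1 : ℂ)) =
      (single γ δ (1 : ℂ) + a₂ • single δ γ (1 : ℂ)) *
        (single k l (1 : ℂ) + a₁ • single l k (1 : ℂ)) ↔
      (k = γ ∧ l = δ ∧ a₁ = a₂) ∨ (k = δ ∧ l = γ ∧ a₁ * a₂ = 1) ∨
        (k ≠ γ ∧ k ≠ δ ∧ l ≠ γ ∧ l ≠ δ) := by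
  rw [show (single k l (1 : ℂ) + a₁ • single l k (1 : ℂ)) *
        (single γ δ (1 : ℂ) + a₂ • single δ γ (1 : ℂ)) =
      (if l = γ then single k δ (1:ℂ) else 0)
        + (if l = δ then single k γ a₂ else 0)
        + (if k = γ then single l δ a₁ else 0)
        + (if k = δ then single l γ (a₁ * a₂) else 0) by
    simp only [Matrix.smul_single, smul_eq_mul, mul_one, mul_add, add_mul, mulE,
      one_mul]
    abel]
  rw [show (single γ δ (1 : ℂ) + a₂ • single δ γ (1 : ℂ)) *
        (single k l (1 : ℂ) + a₁ • single l k (1 : ℂ)) =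
      (if δ = k then single γ l (1:ℂ) else 0)
        + (if δ = l then single γ k a₁ else 0)
        + (if γ = k then single δ l a₂ else 0)
        + (if γ = l then single δ k (a₂ * a₁) else 0) by
    simp only [Matrix.smul_single, smul_eq_mul, mul_one, mul_add, add_mul, mulE,
      one_mul]
    abel]
  by_cases hkγ : k = γ
  · have hkδ : k ≠ δ := fun h => hγδ (hkγ ▸ h ▸ rfl)
    have hlγ : l ≠ γ := fun h => hkl (hkγ.trans h.symm)
    by_cases hlδ : l = δ
    · -- T₁ = T₂ case
      rw [if_neg hlγ, if_pos hlδ, if_pos hkγ, if_neg hkδ,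
        if_neg (fun h : δ = k => hkδ h.symm), if_pos hlδ.symm, if_pos hkγ.symm,
        if_neg (fun h : γ = l => hlγ h.symm)]
      simp only [zero_add, add_zero]
      constructor
      · intro h
        left
        refine ⟨hkγ, hlδ, ?_⟩
        have := congrFun (congrFun h k) γ
        simp [Eapply, hkγ, hlδ, hγδ, Ne.symm hγδ, hkl, Ne.symm hkl] at this
        exact this.symm
      · rintro (⟨-, -, h⟩ | ⟨h, -⟩ | ⟨h, -⟩)
        · rw [h, hkγ, hlδ]
        · exact absurd h hkδ
        · exact absurd hkγ h
    · -- k = γ only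
      rw [if_neg hlγ, if_neg hlδ, if_pos hkγ, if_neg hkδ,
        if_neg (fun h : δ = k => hkδ h.symm), if_neg (fun h : δ = l => hlδ h.symm),
        if_pos hkγ.symm, if_neg (fun h : γ = l => hlγ h.symm)]
      simp only [zero_add, add_zero]
      constructor
      · intro h
        exfalso
        have := congrFun (congrFun h l) δ
        simp [Eapply, hlδ, hkγ, hkl, Ne.symm hkl, hγδ, Ne.symm hγδ] at this
        exact ha₁ this
      · rintro (⟨-, h, -⟩ | ⟨h, -⟩ | ⟨h, -⟩)
        · exact absurd h hlδ
        · exact absurd h hkδ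
        · exact absurd hkγ h
  · by_cases hkδ : k = δ
    · have hlδ : l ≠ δ := fun h => hkl (hkδ.trans h.symm)
      by_cases hlγ : l = γ
      · -- T₁ ∝ T₂ case
        rw [if_pos hlγ, if_neg hlδ, if_neg hkγ, if_pos hkδ,
          if_pos hkδ.symm, if_neg (fun h : δ = l => hlδ h.symm),
          if_neg (fun h : γ = k => hkγ h.symm), if_pos hlγ.symm]
        simp only [zero_add, add_zero]
        constructor
        · intro h
          right; left
          refine ⟨hkδ, hlγ, ?_⟩
          have := congrFun (congrFun h k) δ
          simp [Eapply, hkδ, hlγ, hγδ, Ne.symm hγδ, hkl, Ne.symm hkl] at this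
          rw [mul_comm]
          exact this.symm
        · rintro (⟨h, -⟩ | ⟨-, -, h⟩ | ⟨-, h, -⟩)
          · exact absurd h hkγ
          · rw [hkδ, hlγ, h, mul_comm a₂ a₁, h]
            abel
          · exact absurd hkδ h
      · -- k = δ only
        rw [if_neg hlγ, if_neg hlδ, if_neg hkγ, if_pos hkδ,
          if_pos hkδ.symm, if_neg (fun h : δ = l => hlδ h.symm),
          if_neg (fun h : γ = k => hkγ h.symm), if_neg (fun h : γ = l => hlγ h.symm)]
        simp only [zero_add, add_zero]
        constructor
        · intro h
          exfalso
          have := congrFun (congrFun h l) γ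
          simp [Eapply, hlγ, hkδ, hkl, Ne.symm hkl, hγδ, Ne.symm hγδ] at this
          rcases this with h' | h'
          · exact ha₁ h'
          · exact ha₂ h'
        · rintro (⟨h, -⟩ | ⟨-, h, -⟩ | ⟨-, h, -⟩)
          · exact absurd h hkγ
          · exact absurd h hlγ
          · exact absurd hkδ h
    · by_cases hlγ : l = γ
      · -- l = γ only
        have hlδ : l ≠ δ := fun h => hγδ (hlγ ▸ h ▸ rfl)
        rw [if_pos hlγ, if_neg hlδ, if_neg hkγ, if_neg hkδ,
          if_neg (fun h : δ = k => hkδ h.symm), if_neg (fun h : δ = l => hlδ h.symm),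
          if_neg (fun h : γ = k => hkγ h.symm), if_pos hlγ.symm]
        simp only [zero_add, add_zero]
        constructor
        · intro h
          exfalso
          have := congrFun (congrFun h k) δ
          simp [Eapply, hkδ, hlγ, hkl, Ne.symm hkl, hγδ, Ne.symm hγδ] at this
        · rintro (⟨h, -⟩ | ⟨h, -⟩ | ⟨-, -, h, -⟩)
          · exact absurd h hkγ
          · exact absurd h hkδ
          · exact absurd hlγ h
      · by_cases hlδ : l = δ
        · -- l = δ only
          rw [if_neg hlγ, if_pos hlδ, if_neg hkγ, if_neg hkδ,
            if_neg (fun h : δ = k => hkδ h.symm), if_pos hlδ.symm,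
            if_neg (fun h : γ = k => hkγ h.symm), if_neg (fun h : γ = l => hlγ h.symm)]
          simp only [zero_add, add_zero]
          constructor
          · intro h
            exfalso
            have := congrFun (congrFun h k) γ
            simp [Eapply, hkγ, hlδ, hkl, Ne.symm hkl, hγδ, Ne.symm hγδ] at this
            exact ha₂ this
          · rintro (⟨h, -⟩ | ⟨h, -⟩ | ⟨-, -, -, h⟩)
            · exact absurd h hkγ
            · exact absurd h hkδ
            · exact absurd hlδ h
        · -- all distinct
          rw [if_neg hlγ, if_neg hlδ, if_neg hkγ, if_neg hkδ,
            if_neg (fun h : δ = k => hkδ h.symm), if_neg (fun h : δ = l => hlδ h.symm),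
            if_neg (fun h : γ = k => hkγ h.symm), if_neg (fun h : γ = l => hlγ h.symm)]
          simp [hkγ, hkδ, hlγ, hlδ]
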